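/- For any integer n ≥ 2, the iterated integral ∫₀¹ ∫₀^{x₁} ⋯ ∫₀^{x_{n-1}} 1/(x₁·x₂·⋯·x_{n-1}·(1+x_n)) dx_n ⋯ dx₁ equals ((2^{n-1} − 1)/2^{n-1})·ζ(n), where ζ is the Riemann zeta function. -/

import Mathlib

open MeasureTheory Set


/-- Iterated inner integrals of the invariant density of the triangle map:
`triIter 1 t = ∫₀^t 1/(1+s) ds`, `triIter (m+1) t = ∫₀^t triIter m s / s ds`. -/
noncomputable def triIter : ℕ → ℝ → ℝ
  | 0, t => 1 / (1 + t)
  | 1, t => ∫ s in (0 : ℝ)..t, 1 / (1 + s)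
  | (m + 2), t => ∫ s in (0 : ℝ)..t, triIter (m + 1) s / s

private lemma summable_zeta (n : ℕ) (hn : 2 ≤ n) :
    Summable fun k : ℕ => 1 / ((k:ℝ)+1) ^ n := by
  have h := Real.summable_one_div_nat_pow.mpr hn
  have h2 := (summable_nat_add_iff 1).mpr h
  refine h2.congr fun k => ?_
  push_cast
  ring

private lemma summable_aux (m : ℕ) {t : ℝ} (ht0 : 0 ≤ t) (ht1 : t < 1) :
    Summable fun k : ℕ => t ^ (k+1) / ((k:ℝ)+1) ^ m := by
  refine Summable.of_nonneg_of_le (fun k => by positivity) (fun k => ?_)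
    (summable_geometric_of_lt_one ht0 ht1)
  have h1 : (1:ℝ) ≤ ((k:ℝ)+1)^m := by bound
  calc t ^ (k+1) / ((k:ℝ)+1) ^ m ≤ t ^ (k+1) := div_le_self (by positivity) h1
    _ ≤ t ^ k := pow_le_pow_of_le_one ht0 ht1.le (Nat.le_succ k)

private lemma core (m : ℕ) {t : ℝ} (ht0 : 0 ≤ t)
    (hsum : Summable fun k : ℕ => t ^ (k+1) / ((k:ℝ)+1) ^ (m+1)) :
    (∫ s in (0:ℝ)..t, (∑' k : ℕ, (-1:ℝ) ^ k * s ^ k / ((k:ℝ)+1) ^ m))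
      = ∑' k : ℕ, (-1:ℝ) ^ k * t ^ (k+1) / ((k:ℝ)+1) ^ (m+1) := by
  have hint : ∀ k : ℕ, Integrable (fun s : ℝ => (-1:ℝ)^k * s^k / ((k:ℝ)+1)^m)
      (volume.restrict (Ioc (0:ℝ) t)) := fun k =>
    (Continuous.integrableOn_Ioc (by continuity))
  have hIoc : ∀ k : ℕ, (∫ s in Ioc (0:ℝ) t, s ^ k) = t ^ (k+1) / ((k:ℝ)+1) := by
    intro k
    rw [← intervalIntegral.integral_of_le ht0, integral_pow]
    simp
  have hnorm : (fun k : ℕ => ∫ s in Ioc (0:ℝ) t, ‖(-1:ℝ)^k * s^k / ((k:ℝ)+1)^m‖)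
      = fun k : ℕ => t ^ (k+1) / ((k:ℝ)+1) ^ (m+1) := by
    funext k
    have h1 : EqOn (fun s : ℝ => ‖(-1:ℝ)^k * s^k / ((k:ℝ)+1)^m‖)
        (fun s : ℝ => s^k * (1/((k:ℝ)+1)^m)) (Ioc (0:ℝ) t) := by
      intro s hs
      simp only [Real.norm_eq_abs, abs_div, abs_mul, abs_pow, abs_neg, abs_one, one_pow, one_mul,
        abs_of_nonneg hs.1.le, abs_of_nonneg (by positivity : (0:ℝ) ≤ ((k:ℝ)+1))]
      ring
    rw [setIntegral_congr_fun measurableSet_Ioc h1, integral_mul_const, hIoc k, pow_succ]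
    have hk : ((k:ℝ)+1) ≠ 0 := by positivity
    have hkm : ((k:ℝ)+1)^m ≠ 0 := by positivity
    field_simp
    ring
  rw [intervalIntegral.integral_of_le ht0,
    ← MeasureTheory.integral_tsum_of_summable_integral_norm hint (hnorm ▸ hsum)]
  refine tsum_congr fun k => ?_
  have h2 : (fun s : ℝ => (-1:ℝ)^k * s^k / ((k:ℝ)+1)^m)
      = fun s : ℝ => ((-1:ℝ)^k/((k:ℝ)+1)^m) * s^k := by funext s; ring
  rw [h2, MeasureTheory.integral_const_mul, hIoc k, pow_succ]
  have hk : ((k:ℝ)+1) ≠ 0 := by positivity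
  have hkm : ((k:ℝ)+1)^m ≠ 0 := by positivity
  field_simp
  ring

private lemma div_tsum_eq (m : ℕ) {s : ℝ} (hs0 : 0 < s) :
    (∑' k : ℕ, (-1:ℝ) ^ k * s ^ (k+1) / ((k:ℝ)+1) ^ m) / s
      = ∑' k : ℕ, (-1:ℝ) ^ k * s ^ k / ((k:ℝ)+1) ^ m := by
  rw [← tsum_div_const]
  refine tsum_congr fun k => ?_
  rw [pow_succ]
  field_simp

private lemma triIter_eq : ∀ (m : ℕ) {t : ℝ}, 0 ≤ t → t < 1 →
    triIter (m+1) t = ∑' k : ℕ, (-1:ℝ) ^ k * t ^ (k+1) / ((k:ℝ)+1) ^ (m+1) := by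
  intro m
  induction m with
  | zero =>
    intro t ht0 ht1
    show (∫ s in (0:ℝ)..t, 1/(1+s)) = _
    rw [intervalIntegral.integral_congr
      (g := fun s => ∑' k : ℕ, (-1:ℝ)^k * s^k / ((k:ℝ)+1)^0) ?_]
    · exact core 0 ht0 (summable_aux 1 ht0 ht1)
    · intro s hs
      rw [Set.uIcc_of_le ht0] at hs
      have hs1 : |(-s)| < 1 := by
        rw [abs_neg, abs_of_nonneg hs.1]; exact lt_of_le_of_lt hs.2 ht1
      have h := hasSum_geometric_of_abs_lt_one hs1
      have h2 : (fun k : ℕ => (-s) ^ k)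
          = fun k : ℕ => (-1:ℝ) ^ k * s ^ k / ((k:ℝ)+1) ^ 0 := by
        funext k; rw [neg_pow]; simp
      rw [h2] at h
      show 1 / (1 + s) = ∑' k : ℕ, (-1:ℝ)^k * s^k / ((k:ℝ)+1)^0
      rw [h.tsum_eq, sub_neg_eq_add, one_div]
  | succ m ih =>
    intro t ht0 ht1
    show (∫ s in (0:ℝ)..t, triIter (m+1) s / s) = _
    rw [intervalIntegral.integral_congr_ae
      (g := fun s => ∑' k : ℕ, (-1:ℝ)^k * s^k / ((k:ℝ)+1)^(m+1)) ?_]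
    · exact core (m+1) ht0 (summable_aux (m+2) ht0 ht1)
    · refine Filter.Eventually.of_forall fun s hs => ?_
      rw [Set.uIoc_of_le ht0] at hs
      have hs1 : s < 1 := lt_of_le_of_lt hs.2 ht1
      rw [ih hs.1.le hs1, div_tsum_eq (m+1) hs.1]

private lemma eta_eq (n : ℕ) (hn : 2 ≤ n) :
    (∑' k : ℕ, (-1:ℝ) ^ k * 1 ^ (k+1) / ((k:ℝ)+1) ^ n)
      = (((2:ℝ) ^ (n-1) - 1) / (2:ℝ) ^ (n-1)) * ∑' k : ℕ, 1 / ((k:ℝ)+1) ^ n := by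
  have hζ := summable_zeta n hn
  set g : ℕ → ℝ := fun k => 1 / ((k:ℝ)+1) ^ n with hg
  have hgnn : ∀ k, 0 ≤ g k := fun k => by positivity
  have hE : Summable fun k => g (2*k) := by
    refine Summable.of_nonneg_of_le (fun k => hgnn _) (fun k => ?_) hζ
    simp only [hg]
    gcongr
    all_goals push_cast; linarith [Nat.cast_nonneg (α := ℝ) k]
  have hO : Summable fun k => g (2*k+1) := by
    refine Summable.of_nonneg_of_le (fun k => hgnn _) (fun k => ?_) hζ
    simp only [hg]
    gcongr
    all_goals push_cast; linarith [Nat.cast_nonneg (α := ℝ) k]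
  -- the alternating series in terms of g
  have hfg_even : ∀ k : ℕ, (-1:ℝ) ^ (2*k) * 1 ^ (2*k+1) / (((2*k:ℕ):ℝ)+1) ^ n = g (2*k) := by
    intro k
    simp [hg, (even_two_mul k).neg_one_pow]
  have hfg_odd : ∀ k : ℕ, (-1:ℝ) ^ (2*k+1) * 1 ^ (2*k+1+1) / (((2*k+1:ℕ):ℝ)+1) ^ n
      = -g (2*k+1) := by
    intro k
    have : Odd (2*k+1) := odd_two_mul_add_one k
    simp [hg, this.neg_one_pow, neg_div]
  have hf : Summable fun k : ℕ => (-1:ℝ) ^ k * 1 ^ (k+1) / ((k:ℝ)+1) ^ n := by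
    refine Summable.of_norm (hζ.congr fun k => ?_)
    simp [hg, abs_div]
    rw [abs_of_nonneg (by positivity : (0:ℝ) ≤ (k:ℝ)+1)]
  have hsplit := tsum_even_add_odd (M := ℝ)
    (f := fun k : ℕ => (-1:ℝ) ^ k * 1 ^ (k+1) / ((k:ℝ)+1) ^ n)
    ((hE.congr (fun k => (hfg_even k).symm)))
    ((hO.neg.congr (fun k => (hfg_odd k).symm)))
  have hsplitζ := tsum_even_add_odd (M := ℝ) (f := g) hE hO
  rw [tsum_congr hfg_even, tsum_congr hfg_odd, tsum_neg] at hsplit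
  -- compute the odd part of ζ
  have hOval : (∑' k : ℕ, g (2*k+1)) = (1/(2:ℝ)^n) * ∑' k, g k := by
    rw [← tsum_mul_left]
    refine tsum_congr fun k => ?_
    simp only [hg]
    have h2 : (((2*k+1:ℕ):ℝ)+1) = 2*((k:ℝ)+1) := by push_cast; ring
    rw [h2, mul_pow]
    have hk : ((k:ℝ)+1) ≠ 0 := by positivity
    field_simp
  have h2n : (2:ℝ) ^ n = 2 * (2:ℝ) ^ (n-1) := by
    rw [← pow_succ']
    congr 1
    omega
  have hpos : (0:ℝ) < (2:ℝ) ^ (n-1) := by positivity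
  rw [hOval] at hsplit hsplitζ
  have hsplit' : (∑' k:ℕ, g (2*k)) + -(1/2^n * ∑' k, g k)
      = ∑' k:ℕ, (-1:ℝ)^k * 1^(k+1) / ((k:ℝ)+1)^n := hsplit
  rw [← hsplit']
  have hζ' : (∑' k:ℕ, g (2*k)) = (∑' k, g k) - 1/2^n * ∑' k, g k := by linarith [hsplitζ]
  rw [hζ', h2n]
  have hne : (2:ℝ)^(n-1) ≠ 0 := hpos.ne'
  field_simp
  ring

/-- The normalizing constant of the invariant measure of the n-dimensional triangle map:
`∫₀¹ ∫₀^{x₁} ⋯ ∫₀^{x_{n-1}} 1/(x₁⋯x_{n-1}(1+x_n)) = ((2^{n-1}−1)/2^{n-1})·ζ(n)`. -/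
theorem stmt4 (n : ℕ) (hn : 2 ≤ n) :
    (∫ t in (0 : ℝ)..1, triIter (n - 1) t / t)
      = (((2 : ℝ) ^ (n - 1) - 1) / (2 : ℝ) ^ (n - 1)) * ∑' k : ℕ, 1 / ((k : ℝ) + 1) ^ n := by
  obtain ⟨p, rfl⟩ := Nat.exists_eq_add_of_le hn
  have hn1 : 2 + p - 1 = p + 1 := by omega
  have hn2 : p + 1 + 1 = 2 + p := by omega
  rw [hn1]
  have hsum : Summable fun k : ℕ => (1:ℝ) ^ (k+1) / ((k:ℝ)+1) ^ (p+1+1) := by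
    refine (summable_zeta (2+p) hn).congr fun k => ?_
    rw [hn2, one_pow]
  have hstep : (∫ t in (0:ℝ)..1, triIter (p+1) t / t)
      = ∑' k : ℕ, (-1:ℝ) ^ k * 1 ^ (k+1) / ((k:ℝ)+1) ^ (p+1+1) := by
    rw [intervalIntegral.integral_congr_ae
      (g := fun s => ∑' k : ℕ, (-1:ℝ)^k * s^k / ((k:ℝ)+1)^(p+1)) ?_]
    · exact core (p+1) zero_le_one hsum
    · have h1 : ∀ᵐ s : ℝ ∂volume, s ≠ 1 := by
        rw [ae_iff]
        have : {s : ℝ | ¬ s ≠ 1} = {1} := by ext s; simp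
        rw [this]
        exact Real.volume_singleton
      filter_upwards [h1] with s hs1 hsmem
      rw [Set.uIoc_of_le zero_le_one] at hsmem
      have hs0 : 0 < s := hsmem.1
      have hslt : s < 1 := lt_of_le_of_ne hsmem.2 hs1
      rw [triIter_eq p hs0.le hslt, div_tsum_eq (p+1) hs0]
  rw [hstep, hn2, eta_eq (2+p) hn, hn1]
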